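/- For α, A > 0 with α ≠ A, every positive real of the form √α·ℓ₀·(q² + p²·A/(α−A))^{1/2} with p, q ∈ ℕ coprime and q/p > A/|A−α| is strictly greater than √α·ℓ₀. -/

import Mathlib

/-- Type III primitive lengths `√α ℓ₀ (q² + p² A/(α-A))^{1/2}` (with `p, q` coprime
positive integers and `q/p > A/|A-α|`) are strictly greater than `√α ℓ₀`,
where `ℓ₀ = 2√2 π`. -/
theorem stmt_11 (α A : ℝ) (hα : 0 < α) (hA : 0 < A) (hne : α ≠ A)
    (p q : ℕ) (hp : 0 < p) (hq : 0 < q) (hcop : Nat.Coprime p q)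
    (hratio : (q : ℝ) / (p : ℝ) > A / |A - α|) :
    Real.sqrt α * (2 * Real.sqrt 2 * Real.pi) *
        Real.sqrt ((q : ℝ) ^ 2 + (p : ℝ) ^ 2 * A / (α - A))
      > Real.sqrt α * (2 * Real.sqrt 2 * Real.pi) := by
  have hc : (0:ℝ) < Real.sqrt α * (2 * Real.sqrt 2 * Real.pi) := by positivity
  have hp1 : (1:ℝ) ≤ (p:ℝ) := by exact_mod_cast hp
  have hq1 : (1:ℝ) ≤ (q:ℝ) := by exact_mod_cast hq
  have hpp : (0:ℝ) < (p:ℝ) := by linarith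
  have key : (1:ℝ) < (q:ℝ) ^ 2 + (p:ℝ) ^ 2 * A / (α - A) := by
    rcases lt_or_gt_of_ne hne with h | h
    · -- α < A
      have hAα : 0 < A - α := by linarith
      rw [abs_of_pos hAα] at hratio
      have h1 : (1:ℝ) < A / (A - α) := (one_lt_div hAα).2 (by linarith)
      have hqp : (p:ℝ) < (q:ℝ) := by
        have : (1:ℝ) < (q:ℝ) / p := lt_trans h1 hratio
        have := (one_lt_div hpp).1 this
        linarith
      have hqpn : p < q := by exact_mod_cast hqp
      have hq1p : (p:ℝ) ≤ (q:ℝ) - 1 := by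
        have : (p:ℝ) + 1 ≤ (q:ℝ) := by exact_mod_cast hqpn
        linarith
      -- A/(A-α) < q/p
      have h2 : (p:ℝ)^2 * (A / (A - α)) < (p:ℝ)^2 * ((q:ℝ)/p) :=
        (mul_lt_mul_iff_right₀ (by positivity)).2 hratio
      have h3 : (p:ℝ)^2 * ((q:ℝ)/p) = p * q := by field_simp
      have h4 : (p:ℝ) * q ≤ ((q:ℝ) - 1) * q := by nlinarith
      have h5 : (p:ℝ)^2 * (A / (A - α)) < (q:ℝ)^2 - 1 := by nlinarith
      have heq : (p:ℝ) ^ 2 * A / (α - A) = -((p:ℝ)^2 * (A / (A - α))) := by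
        rw [show α - A = -(A - α) by ring, div_neg, mul_div_assoc]
      rw [heq]; linarith
    · -- α > A
      have hαA : 0 < α - A := by linarith
      have hpos : 0 < (p:ℝ) ^ 2 * A / (α - A) := by positivity
      nlinarith
  have hs : (1:ℝ) < Real.sqrt ((q:ℝ) ^ 2 + (p:ℝ) ^ 2 * A / (α - A)) := by
    rw [show (1:ℝ) = Real.sqrt 1 by simp]
    exact Real.sqrt_lt_sqrt (by norm_num) key
  exact (lt_mul_iff_one_lt_right hc).2 hs
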